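/- Let x₁,…,x_r ∈ F₂ⁿ be linearly independent vectors such that the Gram matrix [xᵢᵀxⱼ]_{i,j=1}^r has rank at most one. Then r ≤ ⌊(n+1)/2⌋. -/

import Mathlib

open Matrix

/-- If `x₁,…,x_r ∈ F₂ⁿ` are linearly independent and the Gram matrix `[xᵢᵀxⱼ]` has rank at
most one, then `r ≤ ⌊(n+1)/2⌋`. -/
theorem card_le_of_gram_rank_le_one {n r : ℕ} (x : Fin r → Fin n → ZMod 2)
    (hli : LinearIndependent (ZMod 2) x)
    (h : (Matrix.of fun i j : Fin r => x i ⬝ᵥ x j).rank ≤ 1) :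
    r ≤ (n + 1) / 2 := by
  classical
  set G : Matrix (Fin r) (Fin r) (ZMod 2) := Matrix.of fun i j : Fin r => x i ⬝ᵥ x j with hG
  have hcases : ∀ c : ZMod 2, c = 0 ∨ c = 1 := by decide
  -- Step 1: key Gram identity G i j = G i i * G j j
  have hkey : ∀ i j, G i j = G i i * G j j := by
    rw [Matrix.rank, finrank_le_one_iff] at h
    obtain ⟨⟨v, hv⟩, hval⟩ := h
    have hcol : ∀ j : Fin r, (∀ k, G k j = 0) ∨ (∀ k, G k j = v k) := by
      intro j
      have hmem : (fun k => G k j) ∈ LinearMap.range G.mulVecLin := by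
        refine ⟨Pi.single j 1, ?_⟩
        simp [Matrix.mulVecLin_apply, Matrix.mulVec_single]; rfl
      obtain ⟨c, hc⟩ := hval ⟨_, hmem⟩
      rcases hcases c with rfl | rfl
      · left
        intro k
        have := congrFun (congrArg Subtype.val hc) k
        simpa using this.symm
      · right
        intro k
        have := congrFun (congrArg Subtype.val hc) k
        simpa using this.symm
    have hsymm : ∀ i j, G i j = G j i := by
      intro i j; simp [hG, dotProduct_comm]
    intro i j
    rcases hcol i with hi | hi
    · rw [hsymm i j, hi j, hsymm i i, hi i, zero_mul]
    · rcases hcol j with hj | hj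
      · rw [hj i, hsymm j j, hj j, mul_zero]
      · have hij : v i = v j := by rw [← hj i, hsymm i j, ← hi j]
        rw [hj i, hi i, hj j, hij]
        rcases hcases (v j) with h0 | h1
        · rw [h0]; ring
        · rw [h1]; ring
  -- Step 2: extended vectors
  set y : Fin r → Fin (n + 1) → ZMod 2 :=
    fun i => Fin.snoc (x i) (x i ⬝ᵥ x i) with hy
  have hproj : ∀ i, (LinearMap.funLeft (ZMod 2) (ZMod 2) (Fin.castSucc)) (y i) = x i := by
    intro i; ext k; simp [hy, LinearMap.funLeft]
  have hliy : LinearIndependent (ZMod 2) y := by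
    apply LinearIndependent.of_comp (LinearMap.funLeft (ZMod 2) (ZMod 2) (Fin.castSucc))
    convert hli using 1
    ext i k
    simpa using congrFun (hproj i) k
  -- Step 3: extended vectors are pairwise orthogonal
  have horth : ∀ i j, y i ⬝ᵥ y j = 0 := by
    intro i j
    have : y i ⬝ᵥ y j = x i ⬝ᵥ x j + (x i ⬝ᵥ x i) * (x j ⬝ᵥ x j) := by
      simp [dotProduct, hy, Fin.sum_univ_castSucc]
    rw [this]
    have := hkey i j
    simp only [hG, Matrix.of_apply] at this
    rw [← this]
    exact CharTwo.add_self_eq_zero _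
  -- Step 4: self-orthogonal code bound
  set B : LinearMap.BilinForm (ZMod 2) (Fin (n + 1) → ZMod 2) :=
    Matrix.toBilin' (1 : Matrix (Fin (n + 1)) (Fin (n + 1)) (ZMod 2)) with hB
  have hBapply : ∀ u w, B u w = u ⬝ᵥ w := by
    intro u w
    rw [hB, Matrix.toBilin'_apply', Matrix.one_mulVec]
  have hrefl : B.IsRefl := by
    intro u w huw
    rw [hBapply] at huw ⊢
    rwa [dotProduct_comm]
  have hnd : B.Nondegenerate := by
    apply Matrix.Nondegenerate.toBilin'
    apply Matrix.nondegenerate_of_det_ne_zero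
    simp
  set W : Submodule (ZMod 2) (Fin (n + 1) → ZMod 2) :=
    Submodule.span (ZMod 2) (Set.range y) with hW
  have hWfin : Module.finrank (ZMod 2) W = r := by
    rw [hW, finrank_span_eq_card hliy, Fintype.card_fin]
  have hWle : W ≤ B.orthogonal W := by
    rw [hW, Submodule.span_le]
    rintro _ ⟨i, rfl⟩
    rw [SetLike.mem_coe, LinearMap.BilinForm.mem_orthogonal_iff]
    intro u hu
    have : Submodule.span (ZMod 2) (Set.range y) ≤ LinearMap.ker (B.flip (y i)) := by
      rw [Submodule.span_le]
      rintro _ ⟨j, rfl⟩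
      simp only [SetLike.mem_coe, LinearMap.mem_ker, LinearMap.BilinForm.flip_apply]
      rw [hBapply]
      exact horth j i
    have := this hu
    simp only [LinearMap.mem_ker, LinearMap.BilinForm.flip_apply] at this
    exact this
  have hsum := LinearMap.BilinForm.finrank_add_finrank_orthogonal hrefl (B := B) W
  rw [LinearMap.BilinForm.orthogonal_top_eq_bot hnd, inf_bot_eq, finrank_bot, add_zero] at hsum
  have hWW : Module.finrank (ZMod 2) W ≤ Module.finrank (ZMod 2) (B.orthogonal W) :=
    Submodule.finrank_mono hWle
  have hdim : Module.finrank (ZMod 2) (Fin (n + 1) → ZMod 2) = n + 1 := by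
    simp
  rw [hdim, hWfin] at hsum
  rw [hWfin] at hWW
  omega
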